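/- Let d ∈ ℤ, k_m ∈ ℤ, and ε ∈ {−1, +1}. Let h, g : ℤ → ℝ be absolutely summable sequences with Fourier transforms H(ω) = ∑_{k∈ℤ} h[k] e^{-ikω} and G(ω) = ∑_{k∈ℤ} g[k] e^{-ikω}. Let θ : ℝ → ℝ satisfy: for every ω ∈ ℝ there exists n ∈ ℤ with 2θ(ω) = π − (2d+1)ω + 2πn, and suppose G(ω) = e^{-iθ(ω)} H(ω) for every ω ∈ ℝ. If h[2k_m − k] = ε·h[k] for every k ∈ ℤ, then g[2k_m − 2d − 1 − k] = −ε·g[k] for every k ∈ ℤ. -/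

import Mathlib

open Real

open MeasureTheory
set_option maxHeartbeats 1000000

lemma norm_exp_real_mul_I (x : ℝ) : ‖Complex.exp ((x : ℂ) * Complex.I)‖ = 1 := by
  simpa using Complex.abs_exp_ofReal_mul_I x

lemma summable_mul_exp (c : ℤ → ℝ) (hc : Summable fun k => |c k|) (φ : ℤ → ℝ) :
    Summable fun k => (c k : ℂ) * Complex.exp ((φ k : ℂ) * Complex.I) := by
  apply Summable.of_norm
  have : (fun k => ‖(c k : ℂ) * Complex.exp ((φ k : ℂ) * Complex.I)‖) = fun k => |c k| := by
    funext k
    rw [norm_mul, norm_exp_real_mul_I, mul_one, Complex.norm_real, Real.norm_eq_abs]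
  rw [this]; exact hc

lemma integral_exp_int (n : ℤ) :
    (∫ ω in (0:ℝ)..(2*π), Complex.exp ((n:ℂ) * ω * Complex.I)) =
      if n = 0 then (2*π : ℂ) else 0 := by
  by_cases hn : n = 0
  · simp [hn, Complex.ofReal_mul]
  · have hne : (n : ℂ) * Complex.I ≠ 0 := by
      simp [Complex.I_ne_zero, Int.cast_eq_zero, hn]
    have heq : ∀ ω : ℝ, (n:ℂ) * ω * Complex.I = ((n:ℂ) * Complex.I) * ω := by
      intro ω; ring
    simp_rw [heq]
    rw [integral_exp_mul_complex hne]
    have h1 : Complex.exp ((n:ℂ) * Complex.I * (2*π:ℝ)) = 1 := by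
      have := Complex.exp_int_mul_two_pi_mul_I n
      rw [← this]; congr 1; push_cast; ring
    rw [h1]
    simp [hn]

lemma coeffs_eq_zero (c : ℤ → ℝ) (hc : Summable fun k => |c k|)
    (hz : ∀ ω : ℝ, ∑' k : ℤ, (c k : ℂ) *
      Complex.exp (-(((k : ℝ) * ω : ℝ) : ℂ) * Complex.I) = 0) :
    ∀ m : ℤ, c m = 0 := by
  intro m
  set F : ℤ → ℝ → ℂ := fun k ω => (c k : ℂ) *
    Complex.exp ((((m - k : ℤ) : ℝ) * ω : ℂ) * Complex.I) with hF
  have hπ : (0:ℝ) < 2 * π := by positivity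
  -- pointwise sum is zero
  have hzz : ∀ ω : ℝ, ∑' k : ℤ, F k ω = 0 := by
    intro ω
    have key : ∀ k : ℤ, F k ω =
        Complex.exp ((((m : ℝ) * ω : ℝ) : ℂ) * Complex.I) *
          ((c k : ℂ) * Complex.exp (-(((k : ℝ) * ω : ℝ) : ℂ) * Complex.I)) := by
      intro k
      rw [hF]
      simp only [mul_left_comm, ← Complex.exp_add]
      congr 2
      push_cast
      ring
    simp_rw [key]
    rw [tsum_mul_left, hz ω, mul_zero]
  -- integrability & norm facts
  have hnorm : ∀ k : ℤ, ∀ ω : ℝ, ‖F k ω‖ = |c k| := by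
    intro k ω
    rw [hF]
    simp only
    have : ((((m - k : ℤ) : ℝ) * ω : ℂ)) = ((((m - k : ℤ) : ℝ) * ω : ℝ) : ℂ) := by push_cast; ring
    rw [this, norm_mul, norm_exp_real_mul_I, mul_one, Complex.norm_real, Real.norm_eq_abs]
  have hcont : ∀ k : ℤ, Continuous (F k) := by
    intro k
    apply Continuous.mul continuous_const
    apply Complex.continuous_exp.comp
    exact (Continuous.mul (continuous_const.mul Complex.continuous_ofReal) continuous_const)
  have hint : ∀ k : ℤ, Integrable (F k) (volume.restrict (Set.Ioc 0 (2*π))) :=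
    fun k => (hcont k).integrableOn_Ioc
  have hsum : Summable fun k : ℤ => ∫ ω in Set.Ioc (0:ℝ) (2*π), ‖F k ω‖ := by
    have : (fun k : ℤ => ∫ ω in Set.Ioc (0:ℝ) (2*π), ‖F k ω‖)
        = fun k : ℤ => (2*π) * |c k| := by
      funext k
      simp_rw [hnorm k]
      rw [MeasureTheory.setIntegral_const, measureReal_def, Real.volume_Ioc, smul_eq_mul]
      congr 1
      rw [ENNReal.toReal_ofReal (by linarith)]
      ring
    rw [this]
    exact hc.mul_left _
  -- swap
  have hswap := MeasureTheory.integral_tsum_of_summable_integral_norm hint hsum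
  have hL : (∫ ω in Set.Ioc (0:ℝ) (2*π), ∑' k : ℤ, F k ω) = 0 := by
    simp_rw [hzz]; simp
  -- each term
  have hterm : ∀ k : ℤ, (∫ ω in Set.Ioc (0:ℝ) (2*π), F k ω)
      = if k = m then (2*π : ℂ) * c m else 0 := by
    intro k
    rw [← intervalIntegral.integral_of_le (by linarith)]
    have hFk : ∀ ω : ℝ, F k ω = (c k : ℂ) *
        Complex.exp (((m - k : ℤ):ℂ) * ω * Complex.I) := by
      intro ω
      simp only [hF]
      norm_cast
    simp_rw [hFk]
    rw [intervalIntegral.integral_const_mul, integral_exp_int]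
    rcases eq_or_ne k m with hk | hk
    · subst hk; simp [mul_comm]
    · have : ¬ (m - k = 0) := by omega
      simp [this, hk]
  rw [hL] at hswap
  have : (∑' k : ℤ, (if k = m then (2*π : ℂ) * c m else 0)) = 0 := by
    have he : (∑' k : ℤ, (if k = m then (2*π : ℂ) * c m else 0))
        = ∑' k : ℤ, ∫ ω in Set.Ioc (0:ℝ) (2*π), F k ω :=
      tsum_congr fun k => (hterm k).symm
    rw [he]; exact hswap
  rw [tsum_ite_eq m (fun _ => (2*π : ℂ) * (c m : ℂ))] at this
  have h2π : (2*π : ℂ) ≠ 0 := by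
    simp only [ne_eq, mul_eq_zero, not_or]
    exact ⟨two_ne_zero, Complex.ofReal_ne_zero.mpr pi_ne_zero⟩
  have := (mul_eq_zero.mp this).resolve_left h2π
  exact_mod_cast this

lemma norm_exp_neg_real_mul_I (x : ℝ) : ‖Complex.exp (-(x:ℂ) * Complex.I)‖ = 1 := by
  have := norm_exp_real_mul_I (-x)
  simpa using this

lemma summable_mul_unit (c : ℤ → ℝ) (hc : Summable fun k => |c k|) (f : ℤ → ℂ)
    (hf : ∀ k, ‖f k‖ = 1) : Summable fun k => (c k : ℂ) * f k := by
  apply Summable.of_norm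
  have : (fun k => ‖(c k : ℂ) * f k‖) = fun k => |c k| := by
    funext k; rw [norm_mul, hf, mul_one, Complex.norm_real, Real.norm_eq_abs]
  rw [this]; exact hc

lemma exp_shift (a j : ℤ) (ω : ℝ) :
    Complex.exp (-((((a - j : ℤ) : ℝ) * ω : ℝ) : ℂ) * Complex.I)
      = Complex.exp (-(((a : ℝ) * ω : ℝ) : ℂ) * Complex.I) *
        Complex.exp ((((j : ℝ) * ω : ℝ) : ℂ) * Complex.I) := by
  rw [← Complex.exp_add]; congr 1; push_cast; ring

lemma exp_shift' (a j : ℤ) (ω : ℝ) :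
    Complex.exp (((((a - j : ℤ) : ℝ) * ω : ℝ) : ℂ) * Complex.I)
      = Complex.exp ((((a : ℝ) * ω : ℝ) : ℂ) * Complex.I) *
        Complex.exp (-(((j : ℝ) * ω : ℝ) : ℂ) * Complex.I) := by
  rw [← Complex.exp_add]; congr 1; push_cast; ring

lemma star_mul_exp_neg (c x : ℝ) :
    star ((c:ℂ) * Complex.exp (-(x:ℂ) * Complex.I)) =
      (c:ℂ) * Complex.exp ((x:ℂ) * Complex.I) := by
  have h1 : star ((c:ℂ)) = (c:ℂ) := by simp
  have h2 : star (Complex.exp (-(x:ℂ) * Complex.I)) = Complex.exp ((x:ℂ) * Complex.I) := by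
    rw [show star (Complex.exp (-(x:ℂ)*Complex.I))
      = (starRingEnd ℂ) (Complex.exp (-(x:ℂ)*Complex.I)) from rfl, ← Complex.exp_conj]
    congr 1
    simp
  rw [star_mul', h1, h2, mul_comm]

lemma key_identity (d km : ℤ) (ε : ℝ) (hε2 : ε * ε = 1) (h g : ℤ → ℝ)
    (hhs : Summable fun k : ℤ => |h k|) (hgs : Summable fun k : ℤ => |g k|)
    (θ : ℝ → ℝ)
    (hθ : ∀ ω : ℝ, ∃ n : ℤ,
      2 * θ ω = π - (2 * (d : ℝ) + 1) * ω + 2 * π * n)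
    (hGH : ∀ ω : ℝ,
      (∑' k : ℤ, (g k : ℂ) * Complex.exp (-(((k : ℝ) * ω : ℝ) : ℂ) * Complex.I))
        = Complex.exp (-(θ ω : ℂ) * Complex.I) *
          ∑' k : ℤ, (h k : ℂ) * Complex.exp (-(((k : ℝ) * ω : ℝ) : ℂ) * Complex.I))
    (hsym : ∀ k : ℤ, h (2 * km - k) = ε * h k) (ω : ℝ) :
    ∑' j : ℤ, ((g (2 * km - 2 * d - 1 - j) + ε * g j : ℝ) : ℂ) *
      Complex.exp (-(((j : ℝ) * ω : ℝ) : ℂ) * Complex.I) = 0 := by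
  set M : ℤ := 2 * km - 2 * d - 1 with hM
  set En : ℤ → ℂ := fun j => Complex.exp (-(((j : ℝ) * ω : ℝ) : ℂ) * Complex.I) with hEn
  set Ep : ℤ → ℂ := fun j => Complex.exp ((((j : ℝ) * ω : ℝ) : ℂ) * Complex.I) with hEp
  have hEnorm_n : ∀ j : ℤ, ‖En j‖ = 1 := fun j => norm_exp_neg_real_mul_I _
  have hEnorm_p : ∀ j : ℤ, ‖Ep j‖ = 1 := fun j => norm_exp_real_mul_I _
  have hsgn : Summable fun j : ℤ => (g j : ℂ) * En j := summable_mul_unit g hgs En hEnorm_n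
  have hshn : Summable fun j : ℤ => (h j : ℂ) * En j := summable_mul_unit h hhs En hEnorm_n
  have hshp : Summable fun j : ℤ => (h j : ℂ) * Ep j := summable_mul_unit h hhs Ep hEnorm_p
  have hgM : Summable fun j : ℤ => |g (M - j)| :=
    (Equiv.subLeft M).summable_iff.mpr hgs
  have hsgMn : Summable fun j : ℤ => ((g (M - j) : ℝ) : ℂ) * En j :=
    summable_mul_unit (fun j => g (M - j)) hgM En hEnorm_n
  set Hn : ℂ := ∑' j : ℤ, (h j : ℂ) * En j with hHn
  set Gn : ℂ := ∑' j : ℤ, (g j : ℂ) * En j with hGn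
  -- star formulas
  have hstarG : star Gn = ∑' j : ℤ, (g j : ℂ) * Ep j := by
    rw [hGn, tsum_star]
    exact tsum_congr fun j => star_mul_exp_neg _ _
  have hstarH : star Hn = ∑' j : ℤ, (h j : ℂ) * Ep j := by
    rw [hHn, tsum_star]
    exact tsum_congr fun j => star_mul_exp_neg _ _
  -- symmetry: star Hn = ε * exp(2 km ω I) * Hn
  have hsymH : star Hn = (ε : ℂ) *
      Complex.exp (((((2*km : ℤ) : ℝ)) * ω : ℂ) * Complex.I) * Hn := by
    rw [hstarH, ← (Equiv.subLeft (2*km)).tsum_eq (fun j => (h j : ℂ) * Ep j)]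
    have hpt : ∀ j : ℤ, (h (Equiv.subLeft (2*km) j) : ℂ) * Ep (Equiv.subLeft (2*km) j)
        = (ε : ℂ) * Complex.exp (((((2*km : ℤ) : ℝ)) * ω : ℂ) * Complex.I) *
          ((h j : ℂ) * En j) := by
      intro j
      have h1 : Equiv.subLeft (2*km) j = 2*km - j := rfl
      rw [h1, hsym j]
      have h2 : Ep (2*km - j) = Complex.exp (((((2*km : ℤ) : ℝ)) * ω : ℂ) * Complex.I) * En j := by
        rw [hEp, hEn]
        simpa using exp_shift' (2*km) j ω
      rw [h2]
      push_cast
      ring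
    rw [tsum_congr hpt, tsum_mul_left]
  -- G-H relations
  have hGH' : Gn = Complex.exp (-(θ ω : ℂ) * Complex.I) * Hn := hGH ω
  have hHG : Hn = Complex.exp ((θ ω : ℂ) * Complex.I) * Gn := by
    rw [hGH', ← mul_assoc, ← Complex.exp_add]
    norm_num
  -- phase computation
  obtain ⟨n, hn⟩ := hθ ω
  have hnc := congrArg (Complex.ofReal) hn
  push_cast at hnc
  have hphase : Complex.exp ((θ ω : ℂ) * Complex.I) * Complex.exp ((θ ω : ℂ) * Complex.I) *
      Complex.exp (((((2*km : ℤ) : ℝ)) * ω : ℂ) * Complex.I)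
      = -Complex.exp ((((M : ℝ)) * ω : ℂ) * Complex.I) := by
    rw [← Complex.exp_add, ← Complex.exp_add]
    have harg : (θ ω : ℂ) * Complex.I + (θ ω : ℂ) * Complex.I +
        ((((2*km : ℤ) : ℝ) : ℂ)) * ω * Complex.I
        = (π : ℂ) * Complex.I + (((M : ℝ) : ℂ)) * ω * Complex.I + (n : ℂ) * (2 * π * Complex.I) := by
      rw [hM]
      push_cast
      linear_combination Complex.I * hnc
    rw [harg, Complex.exp_add, Complex.exp_add, Complex.exp_pi_mul_I,
      Complex.exp_int_mul_two_pi_mul_I]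
    ring
  -- star Gn in terms of Gn
  have hstarG2 : star Gn = -(ε : ℂ) * Complex.exp ((((M : ℝ)) * ω : ℂ) * Complex.I) * Gn := by
    calc star Gn = star (Complex.exp (-(θ ω : ℂ) * Complex.I)) * star Hn := by
          rw [hGH', star_mul']
      _ = Complex.exp ((θ ω : ℂ) * Complex.I) * star Hn := by
          congr 1
          have := star_mul_exp_neg 1 (θ ω)
          simpa using this
      _ = Complex.exp ((θ ω : ℂ) * Complex.I) * ((ε : ℂ) *
            Complex.exp (((((2*km : ℤ) : ℝ)) * ω : ℂ) * Complex.I) *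
            (Complex.exp ((θ ω : ℂ) * Complex.I) * Gn)) := by rw [hsymH, ← hHG]
      _ = (ε : ℂ) * (Complex.exp ((θ ω : ℂ) * Complex.I) * Complex.exp ((θ ω : ℂ) * Complex.I) *
            Complex.exp (((((2*km : ℤ) : ℝ)) * ω : ℂ) * Complex.I)) * Gn := by ring
      _ = -(ε : ℂ) * Complex.exp ((((M : ℝ)) * ω : ℂ) * Complex.I) * Gn := by
          rw [hphase]; ring
  -- reindex of g(M-j) sum
  have hE1 : ∑' j : ℤ, ((g (M - j) : ℝ) : ℂ) * En j
      = Complex.exp (-(((M : ℝ) * ω : ℝ) : ℂ) * Complex.I) * ∑' j : ℤ, (g j : ℂ) * Ep j := by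
    rw [← (Equiv.subLeft M).tsum_eq (fun j => ((g (M - j) : ℝ) : ℂ) * En j)]
    have hpt : ∀ j : ℤ, ((g (M - Equiv.subLeft M j) : ℝ) : ℂ) * En (Equiv.subLeft M j)
        = Complex.exp (-(((M : ℝ) * ω : ℝ) : ℂ) * Complex.I) * ((g j : ℂ) * Ep j) := by
      intro j
      have h1 : Equiv.subLeft M j = M - j := rfl
      rw [h1, sub_sub_cancel]
      have h2 : En (M - j) = Complex.exp (-(((M : ℝ) * ω : ℝ) : ℂ) * Complex.I) * Ep j := by
        rw [hEn, hEp]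
        simpa using exp_shift M j ω
      rw [h2]; ring
    rw [tsum_congr hpt, tsum_mul_left]
  -- assemble
  have hsplit : ∑' j : ℤ, ((g (M - j) + ε * g j : ℝ) : ℂ) * En j
      = (∑' j : ℤ, ((g (M - j) : ℝ) : ℂ) * En j) + (ε : ℂ) * Gn := by
    have hpt : ∀ j : ℤ, ((g (M - j) + ε * g j : ℝ) : ℂ) * En j
        = ((g (M - j) : ℝ) : ℂ) * En j + (ε : ℂ) * ((g j : ℂ) * En j) := by
      intro j; push_cast; ring
    rw [tsum_congr hpt, hsgMn.tsum_add (hsgn.mul_left _), tsum_mul_left, hGn]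
  have hεc : (ε : ℂ) * (ε : ℂ) = 1 := by exact_mod_cast congrArg Complex.ofReal hε2
  have hexpM : Complex.exp (-(((M : ℝ) * ω : ℝ) : ℂ) * Complex.I) *
      Complex.exp ((((M : ℝ)) * ω : ℂ) * Complex.I) = 1 := by
    rw [← Complex.exp_add]
    norm_num
  calc ∑' j : ℤ, ((g (M - j) + ε * g j : ℝ) : ℂ) * En j
      = (∑' j : ℤ, ((g (M - j) : ℝ) : ℂ) * En j) + (ε : ℂ) * Gn := hsplit
    _ = Complex.exp (-(((M : ℝ) * ω : ℝ) : ℂ) * Complex.I) * star Gn + (ε : ℂ) * Gn := by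
        rw [hE1, hstarG]
    _ = 0 := by
        rw [hstarG2]
        have : Complex.exp (-(((M : ℝ) * ω : ℝ) : ℂ) * Complex.I) *
            (-(ε : ℂ) * Complex.exp ((((M : ℝ)) * ω : ℂ) * Complex.I) * Gn)
            = -(ε : ℂ) * Gn := by
          calc Complex.exp (-(((M : ℝ) * ω : ℝ) : ℂ) * Complex.I) *
              (-(ε : ℂ) * Complex.exp ((((M : ℝ)) * ω : ℂ) * Complex.I) * Gn)
              = -(ε : ℂ) * Gn * (Complex.exp (-(((M : ℝ) * ω : ℝ) : ℂ) * Complex.I) *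
                Complex.exp ((((M : ℝ)) * ω : ℂ) * Complex.I)) := by ring
            _ = -(ε : ℂ) * Gn := by rw [hexpM]; ring
        rw [this]; ring

/-- Band-pass part of Proposition 4: a symmetric (resp. antisymmetric) filter
has an antisymmetric (resp. symmetric) Hilbert dual, centered at `k_m − d − 1/2`. -/
theorem stmt_9 (d km : ℤ) (ε : ℝ) (hε : ε = 1 ∨ ε = -1) (h g : ℤ → ℝ)
    (hhs : Summable fun k : ℤ => |h k|) (hgs : Summable fun k : ℤ => |g k|)
    (θ : ℝ → ℝ)
    (hθ : ∀ ω : ℝ, ∃ n : ℤ,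
      2 * θ ω = π - (2 * (d : ℝ) + 1) * ω + 2 * π * n)
    (hGH : ∀ ω : ℝ,
      (∑' k : ℤ, (g k : ℂ) * Complex.exp (-(((k : ℝ) * ω : ℝ) : ℂ) * Complex.I))
        = Complex.exp (-(θ ω : ℂ) * Complex.I) *
          ∑' k : ℤ, (h k : ℂ) * Complex.exp (-(((k : ℝ) * ω : ℝ) : ℂ) * Complex.I))
    (hsym : ∀ k : ℤ, h (2 * km - k) = ε * h k) :
    ∀ k : ℤ, g (2 * km - 2 * d - 1 - k) = -ε * g k := by
  intro k
  have hε2 : ε * ε = 1 := by rcases hε with h' | h' <;> rw [h'] <;> norm_num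
  have hcsum : Summable fun j : ℤ => |g (2 * km - 2 * d - 1 - j) + ε * g j| := by
    apply Summable.of_nonneg_of_le (fun j => abs_nonneg _) (fun j => abs_add_le _ _)
    apply Summable.add
    · exact (Equiv.subLeft (2 * km - 2 * d - 1)).summable_iff.mpr hgs
    · have : (fun j : ℤ => |ε * g j|) = fun j : ℤ => |ε| * |g j| := by
        funext j; rw [abs_mul]
      rw [this]
      exact hgs.mul_left _
  have hzero := coeffs_eq_zero (fun j => g (2 * km - 2 * d - 1 - j) + ε * g j) hcsum
    (key_identity d km ε hε2 h g hhs hgs θ hθ hGH hsym) k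
  rw [neg_mul]
  linarith
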